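/- Let n ≥ 3 and let x₁, …, xₙ be real numbers with x₁ + ⋯ + xₙ = 0. Then x₁³ + ⋯ + xₙ³ = -((n-2)/√(n(n-1))) · (x₁² + ⋯ + xₙ²)^{3/2} holds if and only if there exist λ ≥ 0 and an index j such that xⱼ = -(n-1)λ and xᵢ = λ for all i ≠ j. -/

import Mathlib

/-- Equality case of the scalar Okumura inequality: if `x₁ + ⋯ + xₙ = 0` (`n ≥ 3`), then
`x₁³ + ⋯ + xₙ³ = -((n-2)/√(n(n-1))) · (x₁² + ⋯ + xₙ²)^(3/2)` if and only if there exist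
`λ ≥ 0` and an index `j` with `xⱼ = -(n-1)λ` and `xᵢ = λ` for all `i ≠ j`. -/
theorem okumura_scalar_equality_case {n : ℕ} (hn : 3 ≤ n) (x : Fin n → ℝ)
    (hx : ∑ i, x i = 0) :
    ∑ i, (x i) ^ 3 =
      -(((n : ℝ) - 2) / Real.sqrt ((n : ℝ) * ((n : ℝ) - 1))) *
        (∑ i, (x i) ^ 2) ^ ((3 : ℝ) / 2) ↔
    ∃ lam : ℝ, 0 ≤ lam ∧ ∃ j : Fin n,
      x j = -((n : ℝ) - 1) * lam ∧ ∀ i : Fin n, i ≠ j → x i = lam := by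
  have hn3 : (3 : ℝ) ≤ (n : ℝ) := by exact_mod_cast hn
  have hnn : (0 : ℝ) < (n : ℝ) * ((n : ℝ) - 1) := by nlinarith
  set S : ℝ := ∑ i, (x i) ^ 2 with hSdef
  have hS : 0 ≤ S := Finset.sum_nonneg fun i _ => sq_nonneg _
  set l : ℝ := Real.sqrt (S / ((n : ℝ) * ((n : ℝ) - 1))) with hldef
  have hl0 : 0 ≤ l := Real.sqrt_nonneg _
  have hl2 : (n : ℝ) * ((n : ℝ) - 1) * l ^ 2 = S := by
    rw [hldef, Real.sq_sqrt (by positivity)]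
    field_simp
    exact mul_div_cancel_left₀ S (show (n : ℝ) - 1 ≠ 0 by linarith)
  have hsqrtS : Real.sqrt S = Real.sqrt ((n : ℝ) * ((n : ℝ) - 1)) * l := by
    rw [hldef, ← Real.sqrt_mul hnn.le]
    congr 1
    field_simp
    exact (mul_div_cancel_right₀ S (show (n : ℝ) - 1 ≠ 0 by linarith)).symm
  have hrpow : S ^ ((3 : ℝ) / 2) = S * Real.sqrt S := by
    rw [Real.sqrt_eq_rpow, show (3 : ℝ) / 2 = 1 + 1 / 2 by norm_num,
      Real.rpow_add' hS (by norm_num), Real.rpow_one]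
  have hRHS : -(((n : ℝ) - 2) / Real.sqrt ((n : ℝ) * ((n : ℝ) - 1))) * S ^ ((3 : ℝ) / 2)
      = -(((n : ℝ) - 2) * l * S) := by
    have hpos : 0 < Real.sqrt ((n : ℝ) * ((n : ℝ) - 1)) := Real.sqrt_pos.2 hnn
    have hr0 : Real.sqrt ((n : ℝ) * ((n : ℝ) - 1)) ≠ 0 := ne_of_gt hpos
    rw [hrpow, hsqrtS, neg_mul, neg_inj, div_mul_eq_mul_div, div_eq_iff hr0]
    ring
  have key : ∑ i, (x i - l) ^ 2 * (x i + ((n : ℝ) - 1) * l)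
      = (∑ i, (x i) ^ 3) + ((n : ℝ) - 2) * l * S := by
    have h1 : ∀ i ∈ Finset.univ, (x i - l) ^ 2 * (x i + ((n : ℝ) - 1) * l)
        = (x i) ^ 3 + ((n : ℝ) - 3) * l * (x i) ^ 2
          - (2 * (n : ℝ) - 3) * l ^ 2 * (x i) + ((n : ℝ) - 1) * l ^ 3 := by
      intro i _; ring
    rw [Finset.sum_congr rfl h1]
    rw [Finset.sum_add_distrib, Finset.sum_sub_distrib, Finset.sum_add_distrib,
      ← Finset.mul_sum, ← Finset.mul_sum, hx, ← hSdef, Finset.sum_const,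
      Finset.card_univ, Fintype.card_fin, nsmul_eq_mul]
    nlinarith [hl2]
  have hpt : ∀ i, 0 ≤ x i + ((n : ℝ) - 1) * l := by
    intro i
    have hcs : (∑ k ∈ Finset.univ.erase i, x k) ^ 2
        ≤ (Finset.univ.erase i).card * ∑ k ∈ Finset.univ.erase i, (x k) ^ 2 :=
      sq_sum_le_card_mul_sum_sq
    have hsum : ∑ k ∈ Finset.univ.erase i, x k = -x i := by
      have := Finset.add_sum_erase Finset.univ x (Finset.mem_univ i)
      linarith [this.trans hx]
    have hsq : ∑ k ∈ Finset.univ.erase i, (x k) ^ 2 = S - (x i) ^ 2 := by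
      have := Finset.add_sum_erase Finset.univ (fun k => (x k) ^ 2) (Finset.mem_univ i)
      beta_reduce at this
      rw [← hSdef] at this
      linarith [this]
    have hcard : ((Finset.univ.erase i).card : ℝ) = (n : ℝ) - 1 := by
      rw [Finset.card_erase_of_mem (Finset.mem_univ i), Finset.card_univ, Fintype.card_fin]
      rw [Nat.cast_sub (by omega)]
      norm_num
    rw [hsum, hcard, hsq] at hcs
    have hxi2 : (x i) ^ 2 ≤ (((n : ℝ) - 1) * l) ^ 2 := by nlinarith [hl2]
    have habs : |x i| ≤ ((n : ℝ) - 1) * l := by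
      have h1 := Real.sqrt_le_sqrt hxi2
      rwa [Real.sqrt_sq_eq_abs,
        Real.sqrt_sq (mul_nonneg (by linarith) hl0)] at h1
    have := neg_abs_le (x i)
    linarith
  -- equality ↔ sum of nonneg terms is zero
  have hiff0 : (∑ i, (x i) ^ 3 =
      -(((n : ℝ) - 2) / Real.sqrt ((n : ℝ) * ((n : ℝ) - 1))) * S ^ ((3 : ℝ) / 2))
      ↔ ∑ i, (x i - l) ^ 2 * (x i + ((n : ℝ) - 1) * l) = 0 := by
    rw [hRHS, key]
    constructor <;> intro h <;> linarith
  have hterm : ∀ i ∈ Finset.univ, 0 ≤ (x i - l) ^ 2 * (x i + ((n : ℝ) - 1) * l) :=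
    fun i _ => mul_nonneg (sq_nonneg _) (hpt i)
  rw [hiff0, Finset.sum_eq_zero_iff_of_nonneg hterm]
  constructor
  · intro h
    -- each x i = l or x i = -(n-1) l
    have hvals : ∀ i, x i = l ∨ x i = -((n : ℝ) - 1) * l := by
      intro i
      have := h i (Finset.mem_univ i)
      rcases mul_eq_zero.1 this with h' | h'
      · left; have := pow_eq_zero_iff (n := 2) (by norm_num) |>.1 h'; linarith
      · right; linarith
    rcases eq_or_lt_of_le hl0 with hl | hl
    · -- l = 0: all x i = 0
      refine ⟨0, le_refl 0, ⟨0, by omega⟩, ?_, ?_⟩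
      · have := hvals ⟨0, by omega⟩
        rcases this with h' | h' <;> simp [h', ← hl]
      · intro i _
        rcases hvals i with h' | h' <;> simp [h', ← hl]
    · -- l > 0
      have hex : ∃ j, x j ≠ l := by
        by_contra hcon
        push_neg at hcon
        have : ∑ i, x i = (n : ℝ) * l := by
          rw [Finset.sum_congr rfl fun i _ => hcon i, Finset.sum_const,
            Finset.card_univ, Fintype.card_fin, nsmul_eq_mul]
        rw [hx] at this
        nlinarith
      obtain ⟨j, hj⟩ := hex
      have hxj : x j = -((n : ℝ) - 1) * l := (hvals j).resolve_left hj
      refine ⟨l, hl0, j, hxj, ?_⟩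
      intro i hij
      by_contra hcon
      have hxi : x i = -((n : ℝ) - 1) * l := (hvals i).resolve_left hcon
      -- derive contradiction from sum = 0
      have hsplit : ∑ k, x k = x i + (x j + ∑ k ∈ (Finset.univ.erase i).erase j, x k) := by
        rw [Finset.add_sum_erase _ x (Finset.mem_erase.2 ⟨(Ne.symm hij), Finset.mem_univ j⟩),
          Finset.add_sum_erase _ x (Finset.mem_univ i)]
      have hbound : ∑ k ∈ (Finset.univ.erase i).erase j, x k ≤ ((n : ℝ) - 2) * l := by
        have hc : (((Finset.univ.erase i).erase j).card : ℝ) = (n : ℝ) - 2 := by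
          rw [Finset.card_erase_of_mem (Finset.mem_erase.2 ⟨(Ne.symm hij), Finset.mem_univ j⟩),
            Finset.card_erase_of_mem (Finset.mem_univ i), Finset.card_univ, Fintype.card_fin]
          rw [Nat.cast_sub (by omega), Nat.cast_sub (by omega)]
          push_cast
          ring
        calc ∑ k ∈ (Finset.univ.erase i).erase j, x k
            ≤ ∑ k ∈ (Finset.univ.erase i).erase j, l := by
              apply Finset.sum_le_sum
              intro k _
              rcases hvals k with h' | h'
              · rw [h']
              · rw [h']; nlinarith
          _ = (((Finset.univ.erase i).erase j).card : ℝ) * l := by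
              rw [Finset.sum_const, nsmul_eq_mul]
          _ = ((n : ℝ) - 2) * l := by rw [hc]
      rw [hx, hxi, hxj] at hsplit
      have hT : ∑ k ∈ (Finset.univ.erase i).erase j, x k = 2 * ((n : ℝ) - 1) * l := by
        linarith [hsplit]
      rw [hT] at hbound
      have := mul_lt_mul_of_pos_right (show (n : ℝ) - 2 < 2 * ((n : ℝ) - 1) by linarith) hl
      linarith
  · rintro ⟨lam, hlam, j, hj, hrest⟩
    -- first compute S and show l = lam
    have hSval : S = (n : ℝ) * ((n : ℝ) - 1) * lam ^ 2 := by
      have h2 : ∀ k ∈ Finset.univ.erase j, (x k) ^ 2 = lam ^ 2 := fun k hk => by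
        rw [hrest k (Finset.mem_erase.1 hk).1]
      have h3 : ∑ k ∈ Finset.univ.erase j, (x k) ^ 2 = ((n : ℝ) - 1) * lam ^ 2 := by
        rw [Finset.sum_congr rfl h2, Finset.sum_const, nsmul_eq_mul,
          Finset.card_erase_of_mem (Finset.mem_univ j), Finset.card_univ, Fintype.card_fin,
          Nat.cast_sub (by omega)]
        norm_num
      have h4 := Finset.add_sum_erase Finset.univ (fun k => (x k) ^ 2) (Finset.mem_univ j)
      beta_reduce at h4
      have h5 : (x j) ^ 2 = ((n : ℝ) - 1) ^ 2 * lam ^ 2 := by rw [hj]; ring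
      rw [← hSdef, h3, h5] at h4
      linear_combination -h4
    have hleq : l = lam := by
      rw [hldef, hSval]
      rw [show (n : ℝ) * ((n : ℝ) - 1) * lam ^ 2 / ((n : ℝ) * ((n : ℝ) - 1)) = lam ^ 2 by
        field_simp
        exact mul_div_cancel_left₀ (lam ^ 2) (show (n : ℝ) - 1 ≠ 0 by linarith)]
      exact Real.sqrt_sq hlam
    intro i _
    by_cases hij : i = j
    · rw [hij, hj, hleq]; ring
    · rw [hrest i hij, hleq]; ring
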